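/- Let f : X → S¹ be a locally injective continuous surjection from a metrizable continuum X onto the circle. Then X is locally connected. -/

import Mathlib

open Set Metric

/-- A connected component within a compact set is closed. -/
private lemma stmt7_isClosed_ccIn {X : Type*} [TopologicalSpace X] [T2Space X]
    {N : Set X} (hN : IsCompact N) (y : X) :
    IsClosed (connectedComponentIn N y) := by
  by_cases hy : y ∈ N
  · rw [connectedComponentIn_eq_image hy]
    haveI : CompactSpace N := isCompact_iff_compactSpace.mp hN
    exact (isClosed_connectedComponent.isCompact.image continuous_subtype_val).isClosed
  · rw [connectedComponentIn_eq_empty hy]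
    exact isClosed_empty

/-- Boundary bumping: in a connected compact T2 space, the connected component of a point
in a proper closed subset meets the frontier of that subset. -/
private lemma stmt7_bumping {X : Type*} [TopologicalSpace X] [CompactSpace X] [T2Space X]
    [PreconnectedSpace X] {N : Set X} (hN : IsClosed N) (hne : N ≠ Set.univ) {y : X}
    (hy : y ∈ N) : (connectedComponentIn N y ∩ frontier N).Nonempty := by
  by_contra hcon
  rw [Set.not_nonempty_iff_eq_empty] at hcon
  have hNc : IsCompact N := hN.isCompact
  haveI : CompactSpace N := isCompact_iff_compactSpace.mp hNc
  set p : N := ⟨y, hy⟩ with hp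
  set F : Set N := Subtype.val ⁻¹' (frontier N) with hFdef
  have hFclosed : IsClosed F := isClosed_frontier.preimage continuous_subtype_val
  have hdisj : F ∩ ⋂ (s : {s : Set N // IsClopen s ∧ p ∈ s}), (s : Set N) = ∅ := by
    rw [← connectedComponent_eq_iInter_isClopen p, Set.eq_empty_iff_forall_notMem]
    rintro q ⟨hq2, hq1⟩
    have : (q : X) ∈ connectedComponentIn N y ∩ frontier N := by
      refine ⟨?_, hq2⟩
      rw [connectedComponentIn_eq_image hy]
      exact ⟨q, hq1, rfl⟩
    rw [hcon] at this
    exact this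
  obtain ⟨t, ht⟩ := hFclosed.isCompact.elim_finite_subfamily_closed
    (fun s : {s : Set N // IsClopen s ∧ p ∈ s} => (s : Set N))
    (fun s => s.2.1.1) hdisj
  set A : Set N := ⋂ s ∈ t, (s : Set N) with hAdef
  have hAclopen : IsClopen A := isClopen_biInter_finset (fun s _ => s.2.1)
  have hpA : p ∈ A := Set.mem_iInter₂.mpr fun s _ => s.2.2
  have hAF : A ∩ F = ∅ := by
    rw [Set.eq_empty_iff_forall_notMem]
    rintro q ⟨hq1, hq2⟩
    have : q ∈ F ∩ ⋂ s ∈ t, (s : Set N) := ⟨hq2, hq1⟩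
    rw [ht] at this
    exact this
  set A' : Set X := Subtype.val '' A with hA'def
  have hA'N : A' ⊆ N := by rintro _ ⟨q, _, rfl⟩; exact q.2
  have hA'closed : IsClosed A' :=
    (hAclopen.isClosed.isCompact.image continuous_subtype_val).isClosed
  have hA'int : A' ⊆ interior N := by
    rintro _ ⟨q, hq, rfl⟩
    have hqfr : (q : X) ∉ frontier N := by
      intro hfr
      have : q ∈ A ∩ F := ⟨hq, hfr⟩
      rw [hAF] at this
      exact this
    have : (q : X) ∈ N \ frontier N := ⟨q.2, hqfr⟩
    rw [hN.frontier_eq] at this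
    rcases this with ⟨h1, h2⟩
    by_contra hint
    exact h2 ⟨h1, hint⟩
  have hA'open : IsOpen A' := by
    obtain ⟨V, hV, hVA⟩ := isOpen_induced_iff.mp hAclopen.isOpen
    have h1 : A' = V ∩ N := by
      rw [hA'def, ← hVA, Subtype.image_preimage_coe]
      exact Set.inter_comm _ _
    have h2 : A' = V ∩ interior N := by
      apply Set.Subset.antisymm
      · exact Set.subset_inter (h1 ▸ Set.inter_subset_left) hA'int
      · rw [h1]
        exact Set.inter_subset_inter_right V interior_subset
    rw [h2]
    exact hV.inter isOpen_interior
  have hA'ne : A'.Nonempty := ⟨y, ⟨p, hpA, rfl⟩⟩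
  have : A' = Set.univ := IsClopen.eq_univ ⟨hA'closed, hA'open⟩ hA'ne
  exact hne (Set.eq_univ_of_univ_subset (this ▸ hA'N))

/-- Counting: pairwise disjoint intervals of length at least `ε` inside `[a,b]`. -/
private lemma stmt7_count {ι : Type*} (s : Finset ι) (p q : ι → ℝ) {ε a b : ℝ}
    (hab : a ≤ b) (hε : 0 < ε) (hlen : ∀ i ∈ s, ε ≤ |p i - q i|)
    (hsub : ∀ i ∈ s, Set.uIcc (p i) (q i) ⊆ Set.Icc a b)
    (hdisj : (s : Set ι).PairwiseDisjoint (fun i => Set.uIcc (p i) (q i))) :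
    (s.card : ℝ) * ε ≤ b - a := by
  have key : ENNReal.ofReal ((s.card : ℝ) * ε) ≤ ENNReal.ofReal (b - a) := by
    rw [ENNReal.ofReal_mul (by positivity), ENNReal.ofReal_natCast]
    calc (s.card : ENNReal) * ENNReal.ofReal ε
        = ∑ _i ∈ s, ENNReal.ofReal ε := by rw [Finset.sum_const, nsmul_eq_mul]
      _ ≤ ∑ i ∈ s, MeasureTheory.volume (Set.uIcc (p i) (q i)) := by
          refine Finset.sum_le_sum fun i hi => ?_
          rw [Real.volume_interval]
          exact ENNReal.ofReal_le_ofReal (by rw [abs_sub_comm]; exact hlen i hi)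
      _ = MeasureTheory.volume (⋃ i ∈ s, Set.uIcc (p i) (q i)) :=
          (MeasureTheory.measure_biUnion_finset hdisj fun i _ => measurableSet_uIcc).symm
      _ ≤ MeasureTheory.volume (Set.Icc a b) :=
          MeasureTheory.measure_mono (Set.iUnion₂_subset hsub)
      _ = ENNReal.ofReal (b - a) := Real.volume_Icc
  exact (ENNReal.ofReal_le_ofReal_iff (by linarith)).mp key

/-- A locally injective continuous surjection from a metrizable continuum onto
the circle forces the domain to be locally connected. -/
theorem stmt7 {X : Type*} [MetricSpace X] [CompactSpace X] [ConnectedSpace X] [Nonempty X]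
    (f : X → Metric.sphere (0 : ℂ) 1) (hf : Continuous f)
    (hsurj : Function.Surjective f)
    (hli : ∀ x : X, ∃ O : Set X, IsOpen O ∧ x ∈ O ∧ Set.InjOn f O) :
    LocallyConnectedSpace X := by
  classical
  rw [locallyConnectedSpace_iff_connected_subsets]
  intro x U hU
  obtain ⟨O, hO, hxO, hinj⟩ := hli x
  -- two points at positive distance
  have h1mem : (1 : ℂ) ∈ Metric.sphere (0 : ℂ) 1 := by
    simp [mem_sphere_zero_iff_norm]
  have hm1mem : (-1 : ℂ) ∈ Metric.sphere (0 : ℂ) 1 := by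
    simp [mem_sphere_zero_iff_norm]
  obtain ⟨pp, hpp⟩ := hsurj ⟨(1 : ℂ), h1mem⟩
  obtain ⟨qq, hqq⟩ := hsurj ⟨(-1 : ℂ), hm1mem⟩
  have hpq : pp ≠ qq := by
    intro h
    rw [h, hqq] at hpp
    have : (-1 : ℂ) = 1 := congrArg Subtype.val hpp
    norm_num at this
  set D := dist pp qq with hD
  have hDpos : 0 < D := dist_pos.mpr hpq
  -- choose the radius r
  set W := O ∩ interior U ∩ f ⁻¹' (Metric.ball (f x) 1) with hWdef
  have hWopen : IsOpen W :=
    ((hO.inter isOpen_interior).inter (Metric.isOpen_ball.preimage hf))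
  have hxW : x ∈ W :=
    ⟨⟨hxO, mem_interior_iff_mem_nhds.mpr hU⟩, Metric.mem_ball_self one_pos⟩
  obtain ⟨r0, hr0, hballW⟩ := Metric.isOpen_iff.mp hWopen x hxW
  set r := min (r0 / 2) (D / 3) with hrdef
  have hrpos : 0 < r := lt_min (by linarith) (by linarith)
  set N := Metric.closedBall x r with hNdef
  have hNW : N ⊆ W := by
    refine Set.Subset.trans ?_ hballW
    exact Metric.closedBall_subset_ball (lt_of_le_of_lt (min_le_left _ _) (by linarith))
  have hNO : N ⊆ O := fun y hy => (hNW hy).1.1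
  have hNU : N ⊆ U := fun y hy => interior_subset (hNW hy).1.2
  have hNf : ∀ y ∈ N, dist ((f y : ℂ)) ((f x : ℂ)) < 1 := by
    intro y hy
    have := (hNW hy).2
    rwa [Set.mem_preimage, Metric.mem_ball, Subtype.dist_eq] at this
  have hNclosed : IsClosed N := Metric.isClosed_closedBall
  have hNcompact : IsCompact N := hNclosed.isCompact
  have hxN : x ∈ N := Metric.mem_closedBall_self hrpos.le
  have hNproper : N ≠ Set.univ := by
    intro h
    have hpN : pp ∈ N := h ▸ Set.mem_univ pp
    have hqN : qq ∈ N := h ▸ Set.mem_univ qq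
    have h1 : dist pp qq ≤ dist pp x + dist x qq := dist_triangle _ _ _
    have h2 : dist pp x ≤ r := Metric.mem_closedBall.mp hpN
    have h3 : dist x qq ≤ r := by
      have := Metric.mem_closedBall.mp hqN; rwa [dist_comm]
    have h4 : r ≤ D / 3 := min_le_right _ _
    rw [← hD] at h1
    linarith
  -- the chart map h
  set c : ℂ := (starRingEnd ℂ) (f x : ℂ) with hcdef
  set h : X → ℝ := fun y => Complex.arg ((f y : ℂ) * c) with hhdef
  have hnorm : ∀ y : X, ‖(f y : ℂ)‖ = 1 := by
    intro y
    have := (f y).2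
    rw [mem_sphere_zero_iff_norm] at this
    simpa using this
  have habs : ∀ y : X, ‖(f y : ℂ) * c‖ = 1 := by
    intro y
    rw [hcdef, norm_mul, Complex.norm_conj, hnorm, hnorm, mul_one]
  have hxc : (f x : ℂ) * c = 1 := by
    rw [hcdef, Complex.mul_conj, Complex.normSq_eq_norm_sq, hnorm]
    norm_num
  have hslit : ∀ y ∈ N, ((f y : ℂ) * c) ∈ Complex.slitPlane := by
    intro y hy
    set z := (f y : ℂ) * c with hz
    have hdist : ‖1 - z‖ < 1 := by
      rw [← hxc, hz]
      have : (f x : ℂ) * c - (f y : ℂ) * c = ((f x : ℂ) - (f y : ℂ)) * c := by ring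
      rw [this, norm_mul]
      have hc1 : ‖c‖ = 1 := by rw [hcdef, Complex.norm_conj, hnorm]
      rw [hc1, mul_one, ← Complex.dist_eq, dist_comm]
      exact hNf y hy
    have hre : (1 - z).re ≤ ‖1 - z‖ := Complex.re_le_norm _
    rw [Complex.sub_re, Complex.one_re] at hre
    exact Or.inl (by linarith)
  have hmulcont : Continuous fun y : X => (f y : ℂ) * c := hf.subtype_val.mul continuous_const
  have hcont : ContinuousOn h N := by
    intro y hy
    have : ContinuousAt (Complex.arg ∘ fun y : X => (f y : ℂ) * c) y :=
      ContinuousAt.comp (Complex.continuousAt_arg (hslit y hy)) hmulcont.continuousAt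
    exact this.continuousWithinAt
  have hinjN : Set.InjOn h N := by
    intro y hy z hz hyz
    have hc0 : c ≠ 0 := by
      intro h0
      have : ‖c‖ = 0 := by rw [h0, norm_zero]
      rw [hcdef, Complex.norm_conj, hnorm] at this
      norm_num at this
    have h1 : (f y : ℂ) * c = (f z : ℂ) * c :=
      Complex.ext_norm_arg (by rw [habs, habs]) hyz
    have h2 : (f y : ℂ) = (f z : ℂ) := mul_right_cancel₀ hc0 h1
    exact hinj (hNO hy) (hNO hz) (Subtype.ext h2)
  have hrange : ∀ y : X, h y ∈ Set.Icc (-Real.pi) Real.pi :=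
    fun y => ⟨(Complex.neg_pi_lt_arg _).le, Complex.arg_le_pi _⟩
  -- the component of x
  set C := connectedComponentIn N x with hCdef
  by_cases hC : C ∈ nhds x
  · exact ⟨C, hC, isPreconnected_connectedComponentIn,
      (connectedComponentIn_subset _ _).trans hNU⟩
  exfalso
  -- "good" points
  set Good : X → Prop := fun y => y ∈ Metric.ball x (r / 2) ∧ y ∉ C with hGooddef
  have hGoodN : ∀ y, Good y → y ∈ N := by
    intro y hy
    exact Metric.ball_subset_closedBall.trans
      (Metric.closedBall_subset_closedBall (by linarith)) hy.1
  have hxK : ∀ y, Good y → x ∉ connectedComponentIn N y := by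
    intro y hy hx
    have h1 : connectedComponentIn N x = connectedComponentIn N y :=
      (connectedComponentIn_eq (x := y) (F := N) hx).symm
    have h2 : y ∈ connectedComponentIn N y := mem_connectedComponentIn (hGoodN y hy)
    rw [← h1] at h2
    exact hy.2 (by rw [hCdef]; exact h2)
  -- the extension step
  have step : ∀ s : Finset X, (∀ y ∈ s, Good y) →
      ∃ w, Good w ∧ ∀ y ∈ s, w ∉ connectedComponentIn N y := by
    intro s hs
    have hclosed : IsClosed (⋃ y ∈ s, connectedComponentIn N y) :=
      isClosed_biUnion_finset fun y _ => stmt7_isClosed_ccIn hNcompact y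
    have hxnot : x ∈ (⋃ y ∈ s, connectedComponentIn N y)ᶜ := by
      intro hx
      obtain ⟨y, hy, hxy⟩ := Set.mem_iUnion₂.mp hx
      exact hxK y (hs y hy) hxy
    obtain ⟨δ, hδpos, hδ⟩ := Metric.isOpen_iff.mp hclosed.isOpen_compl x hxnot
    set δ' := min δ (r / 2) with hδ'def
    have hδ'pos : 0 < δ' := lt_min hδpos (by linarith)
    have hnsub : ¬ Metric.ball x δ' ⊆ C := by
      intro hsub
      exact hC (Filter.mem_of_superset (Metric.ball_mem_nhds x hδ'pos) hsub)
    obtain ⟨w, hw1, hw2⟩ := Set.not_subset.mp hnsub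
    refine ⟨w, ⟨Metric.ball_subset_ball (min_le_right _ _) hw1, hw2⟩, ?_⟩
    intro y hy hwy
    have : w ∈ (⋃ y ∈ s, connectedComponentIn N y)ᶜ :=
      hδ (Metric.ball_subset_ball (min_le_left _ _) hw1)
    exact this (Set.mem_iUnion₂.mpr ⟨y, hy, hwy⟩)
  -- components are equal or disjoint
  have comp_eq_or_disj : ∀ y z : X,
      connectedComponentIn N y = connectedComponentIn N z ∨
      Disjoint (connectedComponentIn N y) (connectedComponentIn N z) := by
    intro y z
    by_cases hd : Disjoint (connectedComponentIn N y) (connectedComponentIn N z)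
    · exact Or.inr hd
    · obtain ⟨a, ha1, ha2⟩ := Set.not_disjoint_iff.mp hd
      have e1 : connectedComponentIn N y = connectedComponentIn N a :=
        connectedComponentIn_eq (x := y) (F := N) ha1
      have e2 : connectedComponentIn N z = connectedComponentIn N a :=
        connectedComponentIn_eq (x := z) (F := N) ha2
      exact Or.inl (e1.trans e2.symm)
  -- families of arbitrary size
  have chain : ∀ n : ℕ, ∃ s : Finset X, s.card = n ∧ (∀ y ∈ s, Good y) ∧
      (s : Set X).Pairwise
        (fun y z => Disjoint (connectedComponentIn N y) (connectedComponentIn N z)) := by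
    intro n
    induction n with
    | zero => exact ⟨∅, rfl, by simp, by simp⟩
    | succ n ih =>
      obtain ⟨s, hcard, hgood, hdisj⟩ := ih
      obtain ⟨w, hwgood, hwnot⟩ := step s hgood
      have hwN : w ∈ N := hGoodN w hwgood
      have hws : w ∉ s := fun hw => hwnot w hw (mem_connectedComponentIn hwN)
      refine ⟨insert w s, by rw [Finset.card_insert_of_notMem hws, hcard], ?_, ?_⟩
      · intro y hy
        rcases Finset.mem_insert.mp hy with rfl | hy
        exacts [hwgood, hgood y hy]
      · intro y hy z hz hyz
        simp only [Finset.coe_insert, Set.mem_insert_iff, Finset.mem_coe] at hy hz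
        have key : ∀ u ∈ s, Disjoint (connectedComponentIn N w) (connectedComponentIn N u) := by
          intro u hu
          rcases comp_eq_or_disj w u with heq | hd
          · exact absurd (heq ▸ mem_connectedComponentIn hwN) (hwnot u hu)
          · exact hd
        rcases hy with rfl | hy
        · rcases hz with rfl | hz
          · exact absurd rfl hyz
          · exact key z hz
        · rcases hz with rfl | hz
          · exact (key y hy).symm
          · exact hdisj hy hz hyz
  -- the quantitative injectivity constant
  set P : Set (X × X) := Prod.fst ⁻¹' N ∩ Prod.snd ⁻¹' N ∩
      {p : X × X | r / 2 ≤ dist p.1 p.2} with hPdef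
  have hPclosed : IsClosed P :=
    ((hNclosed.preimage continuous_fst).inter (hNclosed.preimage continuous_snd)).inter
      (isClosed_le continuous_const (continuous_fst.dist continuous_snd))
  -- nonemptiness of P via bumping at x
  obtain ⟨b0, hb0K, hb0fr⟩ := stmt7_bumping hNclosed hNproper hxN
  have hfrsphere : frontier N ⊆ Metric.sphere x r := Metric.frontier_closedBall_subset_sphere
  have hb0N : b0 ∈ N := hNclosed.frontier_subset hb0fr
  have hb0dist : dist x b0 = r := by
    have := hfrsphere hb0fr
    rw [Metric.mem_sphere] at this
    rw [dist_comm]; exact this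
  have hPne : P.Nonempty := ⟨(x, b0), ⟨hxN, hb0N⟩, by
    simp only [Set.mem_setOf_eq]
    rw [hb0dist]; linarith⟩
  have hgcont : ContinuousOn (fun p : X × X => |h p.1 - h p.2|) P := by
    have hm1 : Set.MapsTo (Prod.fst : X × X → X) P N := fun p hp => hp.1.1
    have hm2 : Set.MapsTo (Prod.snd : X × X → X) P N := fun p hp => hp.1.2
    exact ((hcont.comp continuous_fst.continuousOn hm1).sub
      (hcont.comp continuous_snd.continuousOn hm2)).abs
  obtain ⟨m, hmP, hmin⟩ := hPclosed.isCompact.exists_isMinOn hPne hgcont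
  set ε := |h m.1 - h m.2| with hεdef
  have hεpos : 0 < ε := by
    have hne : m.1 ≠ m.2 := by
      intro heq
      have := hmP.2
      simp only [Set.mem_setOf_eq, heq, dist_self] at this
      linarith
    have : h m.1 ≠ h m.2 := fun heq => hne (hinjN hmP.1.1 hmP.1.2 heq)
    exact abs_pos.mpr (sub_ne_zero.mpr this)
  have hεle : ∀ y z : X, y ∈ N → z ∈ N → r / 2 ≤ dist y z → ε ≤ |h y - h z| := by
    intro y z hy hz hd
    have hmem : (y, z) ∈ P := ⟨⟨hy, hz⟩, by simpa using hd⟩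
    exact hmin hmem
  -- final counting
  set B := Nat.ceil (2 * Real.pi / ε) with hBdef
  obtain ⟨s, hcard, hgood, hdisj⟩ := chain (B + 1)
  have hbex : ∀ y ∈ s, ∃ b, b ∈ connectedComponentIn N y ∧ b ∈ frontier N := by
    intro y hy
    obtain ⟨b, hb1, hb2⟩ := stmt7_bumping hNclosed hNproper (hGoodN y (hgood y hy))
    exact ⟨b, hb1, hb2⟩
  choose! bf hbf1 hbf2 using hbex
  have hbfN : ∀ y ∈ s, bf y ∈ N := fun y hy => hNclosed.frontier_subset (hbf2 y hy)
  have hbfdist : ∀ y ∈ s, r / 2 ≤ dist y (bf y) := by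
    intro y hy
    have h1 : dist x (bf y) = r := by
      have := hfrsphere (hbf2 y hy)
      rw [Metric.mem_sphere] at this
      rw [dist_comm]; exact this
    have h2 : dist x y < r / 2 := by
      have := (hgood y hy).1
      rw [Metric.mem_ball, dist_comm] at this
      exact this
    have h3 : dist x (bf y) ≤ dist x y + dist y (bf y) := dist_triangle _ _ _
    linarith
  have hlen : ∀ y ∈ s, ε ≤ |h y - h (bf y)| := fun y hy =>
    hεle y (bf y) (hGoodN y (hgood y hy)) (hbfN y hy) (hbfdist y hy)
  have hIccsub : ∀ y ∈ s, Set.uIcc (h y) (h (bf y)) ⊆ h '' connectedComponentIn N y := by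
    intro y hy
    have hKsub : connectedComponentIn N y ⊆ N := connectedComponentIn_subset _ _
    have hpre : IsPreconnected (h '' connectedComponentIn N y) :=
      isPreconnected_connectedComponentIn.image h (hcont.mono hKsub)
    exact (isPreconnected_iff_ordConnected.mp hpre).uIcc_subset
      (Set.mem_image_of_mem h (mem_connectedComponentIn (hGoodN y (hgood y hy))))
      (Set.mem_image_of_mem h (hbf1 y hy))
  have hsub : ∀ y ∈ s, Set.uIcc (h y) (h (bf y)) ⊆ Set.Icc (-Real.pi) Real.pi :=
    fun y _ => Set.uIcc_subset_Icc (hrange y) (hrange (bf y))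
  have hpd : (s : Set X).PairwiseDisjoint (fun y => Set.uIcc (h y) (h (bf y))) := by
    intro y hy z hz hyz
    have hdKs : Disjoint (connectedComponentIn N y) (connectedComponentIn N z) :=
      hdisj hy hz hyz
    rw [Function.onFun, Set.disjoint_left]
    intro t hty htz
    obtain ⟨a, ha, hat⟩ := hIccsub y hy hty
    obtain ⟨a', ha', hat'⟩ := hIccsub z hz htz
    have hae : a = a' := by
      apply hinjN ((connectedComponentIn_subset _ _) ha)
        ((connectedComponentIn_subset _ _) ha')
      rw [hat, hat']
    exact Set.disjoint_left.mp hdKs ha (hae ▸ ha')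
  have hcount : ((s.card : ℝ)) * ε ≤ Real.pi - (-Real.pi) :=
    stmt7_count s (fun y => h y) (fun y => h (bf y)) (by linarith [Real.pi_pos]) hεpos
      hlen hsub hpd
  rw [hcard] at hcount
  have hB : 2 * Real.pi / ε ≤ (B : ℝ) := Nat.le_ceil _
  have h2pi : 2 * Real.pi = (2 * Real.pi / ε) * ε := by
    field_simp
  have hfinal : 2 * Real.pi + ε ≤ 2 * Real.pi := by
    have h5 : ((B : ℝ) + 1) * ε ≤ 2 * Real.pi := by
      have : ((B + 1 : ℕ) : ℝ) = (B : ℝ) + 1 := by push_cast; ring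
      rw [this] at hcount
      linarith
    have h6 : (2 * Real.pi / ε) * ε ≤ (B : ℝ) * ε :=
      mul_le_mul_of_nonneg_right hB hεpos.le
    rw [← h2pi] at h6
    nlinarith
  linarith [Real.pi_pos]
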